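/- arXiv:2505.16893 — 3 statements merged into one kernel-verified Lean document; each statement's English description precedes it below -/
import Mathlib

section
/- Let Z be a real random variable with continuous strictly increasing cumulative distribution function F, and let 𝒵 ⊆ ℝ be a measurable set with P(Z ∈ 𝒵) > 0. Define the truncated CDF F_𝒵(t) = P(Z ≤ t, Z ∈ 𝒵)/P(Z ∈ 𝒵). Then, conditional on the event {Z ∈ 𝒵}, the random variable U = F_𝒵(Z) is uniformly distributed on (0,1): for all α ∈ (0,1), P(F_𝒵(Z) ≤ α | Z ∈ 𝒵) = α. -/
open MeasureTheory ProbabilityTheory Filter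
open scoped ProbabilityTheory Topology

/-- Truncated probability integral transform: if `Z` has continuous strictly increasing CDF
`F` and `𝒵` is measurable with `P(Z ∈ 𝒵) > 0`, then conditionally on `{Z ∈ 𝒵}` the random
variable `F_𝒵(Z)`, with `F_𝒵(t) = P(Z ≤ t, Z ∈ 𝒵)/P(Z ∈ 𝒵)`, is uniform on `(0,1)`. -/
theorem stmt_4 {Ω : Type*} [MeasurableSpace Ω] (P : Measure Ω) [IsProbabilityMeasure P]
    (Z : Ω → ℝ) (hZ : Measurable Z)
    (F : ℝ → ℝ) (hF : F = fun t => (P {ω | Z ω ≤ t}).toReal)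
    (hFc : Continuous F) (hFm : StrictMono F)
    (𝒵 : Set ℝ) (h𝒵 : MeasurableSet 𝒵) (hpos : 0 < P {ω | Z ω ∈ 𝒵})
    (Ft : ℝ → ℝ)
    (hFt : Ft = fun t =>
      (P {ω | Z ω ≤ t ∧ Z ω ∈ 𝒵}).toReal / (P {ω | Z ω ∈ 𝒵}).toReal)
    (α : ℝ) (hα : α ∈ Set.Ioo (0:ℝ) 1) :
    P[|{ω | Z ω ∈ 𝒵}] {ω | Ft (Z ω) ≤ α} = ENNReal.ofReal α := by
  obtain ⟨hα0, hα1⟩ := hα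
  set E : Set Ω := {ω | Z ω ∈ 𝒵} with hE
  have hmE : MeasurableSet E := hZ h𝒵
  set c : ENNReal := P E with hc
  have hcne : c ≠ ⊤ := measure_ne_top P E
  have hcne0 : c ≠ 0 := hpos.ne'
  set cR : ℝ := c.toReal with hcR
  have hcR0 : 0 < cR := ENNReal.toReal_pos hcne0 hcne
  -- sets
  have hsetEq : ∀ t : ℝ, {ω | Z ω ≤ t ∧ Z ω ∈ 𝒵} = {ω | Z ω ≤ t} ∩ E := by
    intro t; ext ω; simp [hE, Set.mem_inter_iff]
  set G : ℝ → ℝ := fun t => (P ({ω | Z ω ≤ t} ∩ E)).toReal with hG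
  have hFtG : ∀ t, Ft t = G t / cR := by
    intro t; rw [hFt]; simp only [hsetEq]; rfl
  have hmAt : ∀ t : ℝ, MeasurableSet {ω | Z ω ≤ t} := fun t =>
    hZ measurableSet_Iic
  have hGmono : Monotone G := by
    intro s t hst
    exact ENNReal.toReal_mono (measure_ne_top _ _)
      (measure_mono (Set.inter_subset_inter_left _ (fun ω h => le_trans h hst)))
  -- key inequality : for s ≤ t, G t - G s ≤ F t - F s
  have hkey : ∀ s t : ℝ, s ≤ t → G t - G s ≤ F t - F s := by
    intro s t hst
    have hsub : {ω | Z ω ≤ s} ⊆ {ω | Z ω ≤ t} := fun ω h => le_trans h hst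
    have h1 : P ({ω | Z ω ≤ t} ∩ E) + P {ω | Z ω ≤ s}
        ≤ P {ω | Z ω ≤ t} + P ({ω | Z ω ≤ s} ∩ E) := by
      have hsplit : P ({ω | Z ω ≤ t} ∩ E)
          ≤ P ({ω | Z ω ≤ s} ∩ E) + P ({ω | Z ω ≤ t} \ {ω | Z ω ≤ s}) := by
        refine le_trans (measure_mono ?_) (measure_union_le _ _)
        intro ω ⟨h1, h2⟩
        by_cases h : Z ω ≤ s
        · exact Or.inl ⟨h, h2⟩
        · exact Or.inr ⟨h1, h⟩
      have hdiff : P ({ω | Z ω ≤ t} \ {ω | Z ω ≤ s}) + P {ω | Z ω ≤ s}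
          = P {ω | Z ω ≤ t} := by
        rw [add_comm, measure_add_diff (hmAt s).nullMeasurableSet,
          Set.union_eq_self_of_subset_left hsub]
      calc P ({ω | Z ω ≤ t} ∩ E) + P {ω | Z ω ≤ s}
          ≤ (P ({ω | Z ω ≤ s} ∩ E) + P ({ω | Z ω ≤ t} \ {ω | Z ω ≤ s}))
              + P {ω | Z ω ≤ s} := by gcongr
        _ = P {ω | Z ω ≤ t} + P ({ω | Z ω ≤ s} ∩ E) := by
            rw [add_assoc, hdiff]; ring
    have h2 : (P ({ω | Z ω ≤ t} ∩ E)).toReal + (P {ω | Z ω ≤ s}).toReal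
        ≤ (P {ω | Z ω ≤ t}).toReal + (P ({ω | Z ω ≤ s} ∩ E)).toReal := by
      rw [← ENNReal.toReal_add (measure_ne_top _ _) (measure_ne_top _ _),
        ← ENNReal.toReal_add (measure_ne_top _ _) (measure_ne_top _ _)]
      exact ENNReal.toReal_mono (by
        exact ENNReal.add_ne_top.2 ⟨measure_ne_top _ _, measure_ne_top _ _⟩) h1
    rw [hF]
    simp only [hG]
    linarith
  -- continuity of G
  have hGc : Continuous G := by
    rw [Metric.continuous_iff]
    intro x ε hε
    rw [Metric.continuous_iff] at hFc
    obtain ⟨δ, hδ, hδspec⟩ := hFc x ε hε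
    refine ⟨δ, hδ, fun y hy => ?_⟩
    have h1 := hδspec y hy
    rw [Real.dist_eq] at h1 ⊢
    rcases le_total x y with h | h
    · have h2 := hkey x y h
      have h3 : (0:ℝ) ≤ G y - G x := sub_nonneg.2 (hGmono h)
      have h4 : F x ≤ F y := (hFm.le_iff_le).2 h
      rw [abs_sub_lt_iff] at h1 ⊢
      constructor <;> linarith
    · have h2 := hkey y x h
      have h3 : (0:ℝ) ≤ G x - G y := sub_nonneg.2 (hGmono h)
      have h4 : F y ≤ F x := (hFm.le_iff_le).2 h
      rw [abs_sub_lt_iff] at h1 ⊢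
      constructor <;> linarith
  -- S nonempty : some t with G t ≤ α * cR (indeed <)
  have hFtend : Tendsto (fun n : ℕ => (P {ω | Z ω ≤ -(n:ℝ)}).toReal) atTop (𝓝 0) := by
    have hanti : Antitone (fun n : ℕ => {ω | Z ω ≤ -(n:ℝ)}) := by
      intro m n hmn ω h
      simp only [Set.mem_setOf_eq] at h ⊢
      have : -(n:ℝ) ≤ -(m:ℝ) := neg_le_neg (Nat.cast_le.2 hmn)
      linarith
    have hiInter : (⋂ n : ℕ, {ω | Z ω ≤ -(n:ℝ)}) = ∅ := by
      ext ω
      simp only [Set.mem_iInter, Set.mem_empty_iff_false, iff_false, not_forall]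
      obtain ⟨n, hn⟩ := exists_nat_gt (-(Z ω))
      exact ⟨n, by simp; linarith⟩
    have := tendsto_measure_iInter_atTop (μ := P)
      (s := fun n : ℕ => {ω | Z ω ≤ -(n:ℝ)})
      (fun n => (hmAt (-(n:ℝ))).nullMeasurableSet) hanti
      ⟨0, measure_ne_top _ _⟩
    rw [hiInter] at this
    simp only [measure_empty] at this
    exact ((ENNReal.tendsto_toReal (by simp)).comp this)
  have hSne : ∃ t, G t < α * cR := by
    have hpos' : 0 < α * cR := mul_pos hα0 hcR0
    have := hFtend.eventually (eventually_lt_nhds hpos')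
    obtain ⟨n, hn⟩ := this.exists
    refine ⟨-(n:ℝ), lt_of_le_of_lt ?_ hn⟩
    exact ENNReal.toReal_mono (measure_ne_top _ _) (measure_mono Set.inter_subset_left)
  have hSbdd : ∃ N : ℝ, α * cR < G N := by
    have hmono : Monotone (fun n : ℕ => {ω | Z ω ≤ (n:ℝ)} ∩ E) := by
      intro m n hmn
      apply Set.inter_subset_inter_left
      intro ω h
      simp only [Set.mem_setOf_eq] at h ⊢
      exact le_trans h (Nat.cast_le.2 hmn)
    have hiUnion : (⋃ n : ℕ, {ω | Z ω ≤ (n:ℝ)} ∩ E) = E := by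
      ext ω
      simp only [Set.mem_iUnion, Set.mem_inter_iff]
      constructor
      · rintro ⟨n, _, h⟩; exact h
      · intro h
        obtain ⟨n, hn⟩ := exists_nat_gt (Z ω)
        exact ⟨n, hn.le, h⟩
    have := tendsto_measure_iUnion_atTop (μ := P) hmono
    rw [hiUnion] at this
    have h2 : Tendsto (fun n : ℕ => G (n:ℝ)) atTop (𝓝 cR) :=
      (ENNReal.tendsto_toReal hcne).comp this
    have hlt : α * cR < cR := by nlinarith
    obtain ⟨n, hn⟩ := (h2.eventually (eventually_gt_nhds hlt)).exists
    exact ⟨(n:ℝ), hn⟩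
  -- the set S and its sup
  set S : Set ℝ := {t | G t ≤ α * cR} with hS
  obtain ⟨t₁, ht₁⟩ := hSne
  obtain ⟨N, hN⟩ := hSbdd
  have hSne' : S.Nonempty := ⟨t₁, ht₁.le⟩
  have hSbdd' : BddAbove S := ⟨N, fun t ht => by
    by_contra h
    push_neg at h
    have h1 : G N ≤ G t := hGmono h.le
    have h2 : G t ≤ α * cR := ht
    linarith⟩
  have hSclosed : IsClosed S := isClosed_le hGc continuous_const
  set t₀ : ℝ := sSup S with ht₀
  have ht₀mem : t₀ ∈ S := hSclosed.csSup_mem hSne' hSbdd'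
  have hGt₀le : G t₀ ≤ α * cR := ht₀mem
  have hGt₀ge : α * cR ≤ G t₀ := by
    by_contra h
    push_neg at h
    have : ∀ᶠ y in 𝓝 t₀, G y < α * cR := hGc.continuousAt.eventually (eventually_lt_nhds h)
    obtain ⟨δ, hδ, hδspec⟩ := Metric.eventually_nhds_iff.1 this
    have hmem : t₀ + δ / 2 ∈ S := by
      refine le_of_lt (hδspec ?_)
      rw [Real.dist_eq]
      have heq : t₀ + δ / 2 - t₀ = δ / 2 := by ring
      rw [heq, abs_of_pos (half_pos hδ)]
      linarith
    have := le_csSup hSbdd' hmem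
    linarith
  have hGt₀ : G t₀ = α * cR := le_antisymm hGt₀le hGt₀ge
  -- identify the event
  have hevent : {ω | Ft (Z ω) ≤ α} = {ω | Z ω ≤ t₀} := by
    ext ω
    simp only [Set.mem_setOf_eq, hFtG]
    rw [div_le_iff₀ hcR0]
    constructor
    · intro h
      exact le_csSup hSbdd' h
    · intro h
      calc G (Z ω) ≤ G t₀ := hGmono h
        _ = α * cR := hGt₀
  -- compute
  rw [hevent, cond_apply hmE]
  have hPint : P (E ∩ {ω | Z ω ≤ t₀}) = ENNReal.ofReal (α * cR) := by
    have : (P ({ω | Z ω ≤ t₀} ∩ E)).toReal = α * cR := hGt₀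
    rw [Set.inter_comm, ← this, ENNReal.ofReal_toReal (measure_ne_top _ _)]
  rw [hPint]
  rw [ENNReal.ofReal_mul hα0.le, hcR, ENNReal.ofReal_toReal hcne]
  rw [← mul_assoc, mul_comm (c⁻¹) _, mul_assoc, ENNReal.inv_mul_cancel hcne0 hcne, mul_one]
end

section
/- Let Z ~ N(0,1) and let 𝒵 ⊆ ℝ be a Borel set with P(Z ∈ 𝒵) > 0 that is symmetric about 0 (𝒵 = -𝒵). Define, for observed value z₀ ∈ 𝒵, the two-sided selective p-value p(z₀) = P(|Z| ≥ |z₀| | Z ∈ 𝒵). Then conditional on {Z ∈ 𝒵}, p(Z) satisfies P(p(Z) ≤ α | Z ∈ 𝒵) = α for all α ∈ (0,1). -/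
open MeasureTheory ProbabilityTheory
open scoped ProbabilityTheory ENNReal

/-- Conditional uniformity of the two-sided selective p-value: for `Z ~ N(0,1)` and a
symmetric Borel truncation region `𝒵` of positive probability, the p-value
`p(z₀) = P(|Z| ≥ |z₀| | Z ∈ 𝒵)` satisfies `P(p(Z) ≤ α | Z ∈ 𝒵) = α` for `α ∈ (0,1)`. -/
theorem stmt_6 (𝒵 : Set ℝ) (h𝒵 : MeasurableSet 𝒵)
    (hsym : ∀ z : ℝ, z ∈ 𝒵 ↔ -z ∈ 𝒵)
    (hpos : 0 < gaussianReal 0 1 𝒵)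
    (p : ℝ → ℝ)
    (hp : p = fun z₀ =>
      ((gaussianReal 0 1) (𝒵 ∩ {z | |z₀| ≤ |z|})).toReal / ((gaussianReal 0 1) 𝒵).toReal)
    (α : ℝ) (hα : α ∈ Set.Ioo (0:ℝ) 1) :
    (gaussianReal 0 1)[|𝒵] {z | p z ≤ α} = ENNReal.ofReal α := by
  obtain ⟨hα0, hα1⟩ := hα
  set μ := gaussianReal 0 1 with hμ
  have hc0 : μ 𝒵 ≠ 0 := hpos.ne'
  have hct : μ 𝒵 ≠ ∞ := measure_ne_top μ 𝒵
  set c : ℝ := (μ 𝒵).toReal with hc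
  have hcR : 0 < c := ENNReal.toReal_pos hc0 hct
  set G : ℝ → ℝ≥0∞ := fun t => μ (𝒵 ∩ {z | t ≤ |z|}) with hGdef
  have hGanti : Antitone G := fun s t hst =>
    measure_mono (Set.inter_subset_inter_right _ (fun z hz => le_trans hst hz))
  have hGne : ∀ t, G t ≠ ∞ := fun t => measure_ne_top μ _
  have hmeas : ∀ t : ℝ, MeasurableSet (𝒵 ∩ {z | t ≤ |z|}) := fun t =>
    h𝒵.inter (measurableSet_le measurable_const measurable_abs)
  have hatom : ∀ x : ℝ, μ {x} = 0 := fun x =>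
    gaussianReal_absolutelyContinuous 0 one_ne_zero (measure_singleton x)
  -- the set S
  set S : Set ℝ := {t : ℝ | (G t).toReal ≤ α * c} with hSdef
  have hSbdd : BddBelow S := by
    refine ⟨0, fun t ht => ?_⟩
    by_contra h
    push_neg at h
    have : 𝒵 ∩ {z | t ≤ |z|} = 𝒵 := by
      ext z; simp only [Set.mem_inter_iff, Set.mem_setOf_eq, and_iff_left_iff_imp]
      exact fun _ => le_trans h.le (abs_nonneg z)
    rw [hSdef] at ht
    simp only [Set.mem_setOf_eq, hGdef, this] at ht
    nlinarith
  have hSne : S.Nonempty := by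
    have hinter : ⋂ n : ℕ, (𝒵 ∩ {z | (n : ℝ) ≤ |z|}) = ∅ := by
      ext z
      simp only [Set.mem_iInter, Set.mem_inter_iff, Set.mem_setOf_eq, Set.mem_empty_iff_false,
        iff_false, not_forall]
      obtain ⟨n, hn⟩ := exists_nat_gt |z|
      exact ⟨n, fun h => absurd h.2 (not_le.mpr hn)⟩
    have hanti : Antitone (fun n : ℕ => 𝒵 ∩ {z | (n : ℝ) ≤ |z|}) := fun m n hmn =>
      Set.inter_subset_inter_right _ (fun z hz =>
        Set.mem_setOf_eq ▸ le_trans ((Nat.cast_le (α := ℝ)).mpr hmn) hz)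
    have h0 : (⨅ n : ℕ, G (n : ℝ)) = 0 := by
      have := hanti.measure_iInter (fun n => (hmeas _).nullMeasurableSet)
        ⟨0, measure_ne_top μ _⟩
      rw [hinter] at this
      simpa using this.symm
    have hlt : (⨅ n : ℕ, G (n : ℝ)) < ENNReal.ofReal (α * c) := by
      rw [h0]; exact ENNReal.ofReal_pos.mpr (by positivity)
    obtain ⟨n, hn⟩ := iInf_lt_iff.mp hlt
    refine ⟨(n : ℝ), ?_⟩
    rw [hSdef]
    have := ENNReal.toReal_lt_toReal (hGne _) (by simp) |>.mpr hn
    rw [ENNReal.toReal_ofReal (by positivity)] at this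
    exact this.le
  set t₀ : ℝ := sInf S with ht₀
  have ht₀0 : 0 ≤ t₀ := le_csInf hSne (fun t ht => by
    by_contra h
    push_neg at h
    exact absurd ht (by
      intro hmem
      have : 𝒵 ∩ {z | t ≤ |z|} = 𝒵 := by
        ext z; simp only [Set.mem_inter_iff, Set.mem_setOf_eq, and_iff_left_iff_imp]
        exact fun _ => le_trans h.le (abs_nonneg z)
      rw [hSdef] at hmem
      simp only [Set.mem_setOf_eq, hGdef, this] at hmem
      nlinarith))
  -- Key 1 : lower bound
  have key1 : ENNReal.ofReal α * μ 𝒵 ≤ G t₀ := by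
    have hiInter : ⋂ n : ℕ, (𝒵 ∩ {z | t₀ - 1/(n+1) ≤ |z|}) = 𝒵 ∩ {z | t₀ ≤ |z|} := by
      ext z
      simp only [Set.mem_iInter, Set.mem_inter_iff, Set.mem_setOf_eq]
      constructor
      · rintro h
        refine ⟨(h 0).1, ?_⟩
        by_contra hlt
        push_neg at hlt
        obtain ⟨n, hn⟩ := exists_nat_one_div_lt (sub_pos.mpr hlt)
        have := (h n).2
        linarith
      · rintro ⟨hz, hz2⟩ n
        refine ⟨hz, ?_⟩
        have : (0:ℝ) < 1/(n+1) := by positivity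
        linarith
    have hanti : Antitone (fun n : ℕ => 𝒵 ∩ {z | t₀ - 1/(n+1) ≤ |z|}) := by
      intro m n hmn
      refine Set.inter_subset_inter_right _ (fun z hz => ?_)
      simp only [Set.mem_setOf_eq] at hz ⊢
      have h1 : (1:ℝ)/(n+1) ≤ 1/(m+1) := by
        apply one_div_le_one_div_of_le (by positivity)
        have := (Nat.cast_le (α := ℝ)).mpr hmn
        linarith
      linarith
    have heq : G t₀ = ⨅ n : ℕ, G (t₀ - 1/(n+1)) := by
      rw [hGdef]
      simp only
      rw [← hiInter]
      exact hanti.measure_iInter (fun n => (hmeas _).nullMeasurableSet) ⟨0, measure_ne_top μ _⟩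
    rw [heq]
    refine le_iInf fun n => ?_
    have hlt : t₀ - 1/(n+1) < t₀ := by
      have : (0:ℝ) < 1/(n+1) := by positivity
      linarith
    have hnot : (t₀ - 1/(n+1)) ∉ S := fun hmem => absurd (csInf_le hSbdd hmem) (not_le.mpr hlt)
    rw [hSdef, Set.mem_setOf_eq, not_le] at hnot
    calc ENNReal.ofReal α * μ 𝒵 = ENNReal.ofReal (α * c) := by
          rw [ENNReal.ofReal_mul hα0.le, hc, ENNReal.ofReal_toReal hct]
      _ ≤ G (t₀ - 1/(n+1)) := ENNReal.ofReal_le_of_le_toReal hnot.le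
  -- Key 2 : upper bound
  have key2 : G t₀ ≤ ENNReal.ofReal α * μ 𝒵 := by
    have hUnion : ⋃ n : ℕ, (𝒵 ∩ {z | t₀ + 1/(n+1) ≤ |z|}) = 𝒵 ∩ {z | t₀ < |z|} := by
      ext z
      simp only [Set.mem_iUnion, Set.mem_inter_iff, Set.mem_setOf_eq]
      constructor
      · rintro ⟨n, hz, hn⟩
        exact ⟨hz, by nlinarith [one_div_pos.mpr (by positivity : (0:ℝ) < (n:ℝ)+1)]⟩
      · rintro ⟨hz, hlt⟩
        obtain ⟨n, hn⟩ := exists_nat_one_div_lt (sub_pos.mpr hlt)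
        exact ⟨n, hz, by linarith⟩
    have hmono : Monotone (fun n : ℕ => 𝒵 ∩ {z | t₀ + 1/(n+1) ≤ |z|}) := by
      intro m n hmn
      refine Set.inter_subset_inter_right _ (fun z hz => ?_)
      simp only [Set.mem_setOf_eq] at hz ⊢
      have h1 : (1:ℝ)/(n+1) ≤ 1/(m+1) := by
        apply one_div_le_one_div_of_le (by positivity)
        have := (Nat.cast_le (α := ℝ)).mpr hmn
        linarith
      linarith
    have hopen : μ (𝒵 ∩ {z | t₀ < |z|}) ≤ ENNReal.ofReal α * μ 𝒵 := by
      rw [← hUnion, hmono.measure_iUnion]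
      refine iSup_le fun n => ?_
      have hlt : t₀ < t₀ + 1/(n+1) := by
        have : (0:ℝ) < 1/(n+1) := by positivity
        linarith
      obtain ⟨t, htS, htlt⟩ := (csInf_lt_iff hSbdd hSne).mp hlt
      have h1 : G (t₀ + 1/(n+1)) ≤ G t := hGanti htlt.le
      have h2 : G t ≤ ENNReal.ofReal α * μ 𝒵 := by
        rw [hSdef, Set.mem_setOf_eq] at htS
        calc G t = ENNReal.ofReal (G t).toReal := (ENNReal.ofReal_toReal (hGne t)).symm
          _ ≤ ENNReal.ofReal (α * c) := ENNReal.ofReal_le_ofReal htS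
          _ = ENNReal.ofReal α * μ 𝒵 := by
              rw [ENNReal.ofReal_mul hα0.le, hc, ENNReal.ofReal_toReal hct]
      exact h1.trans h2
    have hsub : 𝒵 ∩ {z | t₀ ≤ |z|} ⊆ (𝒵 ∩ {z | t₀ < |z|}) ∪ ({t₀} ∪ {-t₀}) := by
      rintro z ⟨hz, hz2⟩
      replace hz2 : t₀ ≤ |z| := hz2
      rcases lt_or_eq_of_le hz2 with h | h
      · exact Or.inl ⟨hz, h⟩
      · rcases abs_eq ht₀0 |>.mp h.symm with h' | h'
        · exact Or.inr (Or.inl h')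
        · exact Or.inr (Or.inr h')
    calc G t₀ ≤ μ ((𝒵 ∩ {z | t₀ < |z|}) ∪ ({t₀} ∪ {-t₀})) := measure_mono hsub
      _ ≤ μ (𝒵 ∩ {z | t₀ < |z|}) + μ ({t₀} ∪ {-t₀}) := measure_union_le _ _
      _ ≤ μ (𝒵 ∩ {z | t₀ < |z|}) + (μ {t₀} + μ {-t₀}) := by
          gcongr; exact measure_union_le _ _
      _ = μ (𝒵 ∩ {z | t₀ < |z|}) := by rw [hatom, hatom]; simp
      _ ≤ ENNReal.ofReal α * μ 𝒵 := hopen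
  have hGt₀ : G t₀ = ENNReal.ofReal α * μ 𝒵 := le_antisymm key2 key1
  have hGt₀R : (G t₀).toReal = α * c := by
    rw [hGt₀, ENNReal.toReal_mul, ENNReal.toReal_ofReal hα0.le]
  -- the level set is exactly {z | t₀ ≤ |z|}
  have hset : {z : ℝ | p z ≤ α} = {z : ℝ | t₀ ≤ |z|} := by
    ext z
    simp only [Set.mem_setOf_eq, hp]
    rw [div_le_iff₀ hcR]
    constructor
    · intro h
      exact csInf_le hSbdd h
    · intro h
      have : G |z| ≤ G t₀ := hGanti h
      have := ENNReal.toReal_mono (hGne _) this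
      rw [hGt₀R] at this
      exact this
  have hfin : μ (𝒵 ∩ {z | t₀ ≤ |z|}) = ENNReal.ofReal α * μ 𝒵 := hGt₀
  rw [hset, cond_apply h𝒵 μ, hfin, ← mul_assoc, mul_comm _ (ENNReal.ofReal α), mul_assoc,
    ENNReal.inv_mul_cancel hc0 hct, mul_one]
end

section
/- Let f : ℝⁿ → ℝⁿ be piecewise affine with respect to a finite polyhedral partition, let a, b ∈ ℝⁿ, and fix thresholds τ_l < τ_u. For z ∈ ℝ define the selected pair V(z) = (V⁺(z), V⁻(z)) by thresholding f(a + bz) at τ_u and τ_l. Then for any fixed target pair V₀, the set {z ∈ ℝ : V(z) = V₀} is a finite union of intervals. -/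
open Matrix

lemma affine_between {a0 b0 z1 z2 z : ℝ} (h1 : z1 ≤ z) (h2 : z ≤ z2) :
    min (b0 + z1 * a0) (b0 + z2 * a0) ≤ b0 + z * a0 ∧
      b0 + z * a0 ≤ max (b0 + z1 * a0) (b0 + z2 * a0) := by
  rcases le_total 0 a0 with hα | hα
  · exact ⟨le_trans (min_le_left _ _) (by nlinarith),
      le_trans (by nlinarith) (le_max_right _ _)⟩
  · exact ⟨le_trans (min_le_right _ _) (by nlinarith),
      le_trans (by nlinarith) (le_max_left _ _)⟩

/-- A convex polyhedron: a finite intersection of closed half-spaces. -/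
def IsPolyhedron {m : ℕ} (S : Set (Fin m → ℝ)) : Prop :=
  ∃ (k : ℕ) (c : Fin k → (Fin m → ℝ)) (d : Fin k → ℝ),
    S = {x | ∀ i, c i ⬝ᵥ x ≤ d i}

/-- A function is piecewise affine if finitely many convex polyhedra cover the domain and
the function agrees with an affine map on each of them. -/
def IsPiecewiseAffine {m k : ℕ} (f : (Fin m → ℝ) → (Fin k → ℝ)) : Prop :=
  ∃ (N : ℕ) (R : Fin N → Set (Fin m → ℝ)),
    (∀ j, IsPolyhedron (R j)) ∧ (⋃ j, R j) = Set.univ ∧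
    ∀ j, ∃ (C : Matrix (Fin k) (Fin m) ℝ) (d : Fin k → ℝ),
      ∀ x ∈ R j, f x = C.mulVec x + d

/-- For a piecewise affine `f` and thresholds `τ_l < τ_u`, the set of `z ∈ ℝ` for which the
pair of selected subgraphs obtained by thresholding `f(a + z b)` equals a fixed target pair
`V₀` is a finite union of intervals. -/
theorem stmt_18 (n : ℕ) (f : (Fin n → ℝ) → (Fin n → ℝ)) (hf : IsPiecewiseAffine f)
    (a b : Fin n → ℝ) (τl τu : ℝ) (hτ : τl < τu)
    (Vp Vm : ℝ → Set (Fin n))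
    (hVp : Vp = fun z => {i | τu < f (a + z • b) i})
    (hVm : Vm = fun z => {i | f (a + z • b) i ≤ τl})
    (V₀ : Set (Fin n) × Set (Fin n)) :
    ∃ (N : ℕ) (I : Fin N → Set ℝ), (∀ j, (I j).OrdConnected) ∧
      {z | Vp z = V₀.1 ∧ Vm z = V₀.2} = ⋃ j, I j := by
  obtain ⟨N, R, hpoly, hcover, haff⟩ := hf
  refine ⟨N, fun j => {z | Vp z = V₀.1 ∧ Vm z = V₀.2} ∩ {z | a + z • b ∈ R j}, ?_, ?_⟩
  · intro j
    constructor
    intro z1 hz1 z2 hz2 z hz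
    obtain ⟨⟨hz1p, hz1m⟩, hz1R⟩ := hz1
    obtain ⟨⟨hz2p, hz2m⟩, hz2R⟩ := hz2
    obtain ⟨C, dd, hCd⟩ := haff j
    obtain ⟨k, c, d', hR⟩ := hpoly j
    -- the fiber of the line in R j is order-connected
    have hzR : a + z • b ∈ R j := by
      rw [hR]
      intro i
      have h1 : c i ⬝ᵥ a + z1 * (c i ⬝ᵥ b) ≤ d' i := by
        have := hR ▸ hz1R
        have h := this i
        simpa [dotProduct_add, dotProduct_smul, smul_eq_mul] using h
      have h2 : c i ⬝ᵥ a + z2 * (c i ⬝ᵥ b) ≤ d' i := by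
        have := hR ▸ hz2R
        have h := this i
        simpa [dotProduct_add, dotProduct_smul, smul_eq_mul] using h
      have hb := (affine_between (a0 := c i ⬝ᵥ b) (b0 := c i ⬝ᵥ a) hz.1 hz.2).2
      have : c i ⬝ᵥ a + z * (c i ⬝ᵥ b) ≤ d' i := hb.trans (max_le h1 h2)
      simpa [dotProduct_add, dotProduct_smul, smul_eq_mul] using this
    -- affine formula for f along the line, on R j
    have key : ∀ w : ℝ, a + w • b ∈ R j → ∀ i,
        f (a + w • b) i = ((C.mulVec a) i + dd i) + w * (C.mulVec b) i := by
      intro w hw i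
      rw [hCd _ hw]
      simp [Matrix.mulVec_add, Matrix.mulVec_smul, smul_eq_mul]
      ring
    refine ⟨⟨?_, ?_⟩, hzR⟩
    · rw [hVp]
      ext i
      simp only [Set.mem_setOf_eq]
      have hiff1 : i ∈ V₀.1 ↔ τu < f (a + z1 • b) i := by
        rw [← hz1p, hVp]; rfl
      have hiff2 : i ∈ V₀.1 ↔ τu < f (a + z2 • b) i := by
        rw [← hz2p, hVp]; rfl
      rw [key z1 hz1R i] at hiff1
      rw [key z2 hz2R i] at hiff2
      rw [key z hzR i]
      have hb := affine_between (a0 := (C.mulVec b) i)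
        (b0 := (C.mulVec a) i + dd i) hz.1 hz.2
      by_cases hi : i ∈ V₀.1
      · simp only [hi, iff_true]
        exact lt_of_lt_of_le (lt_min (hiff1.mp hi) (hiff2.mp hi)) hb.1
      · simp only [hi, iff_false, not_lt]
        exact hb.2.trans (max_le (not_lt.mp (fun h => hi (hiff1.mpr h)))
          (not_lt.mp (fun h => hi (hiff2.mpr h))))
    · rw [hVm]
      ext i
      simp only [Set.mem_setOf_eq]
      have hiff1 : i ∈ V₀.2 ↔ f (a + z1 • b) i ≤ τl := by
        rw [← hz1m, hVm]; rfl
      have hiff2 : i ∈ V₀.2 ↔ f (a + z2 • b) i ≤ τl := by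
        rw [← hz2m, hVm]; rfl
      rw [key z1 hz1R i] at hiff1
      rw [key z2 hz2R i] at hiff2
      rw [key z hzR i]
      have hb := affine_between (a0 := (C.mulVec b) i)
        (b0 := (C.mulVec a) i + dd i) hz.1 hz.2
      by_cases hi : i ∈ V₀.2
      · simp only [hi, iff_true]
        exact hb.2.trans (max_le (hiff1.mp hi) (hiff2.mp hi))
      · simp only [hi, iff_false, not_le]
        exact lt_of_lt_of_le (lt_min (not_le.mp (fun h => hi (hiff1.mpr h)))
          (not_le.mp (fun h => hi (hiff2.mpr h)))) hb.1
  · ext z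
    simp only [Set.mem_setOf_eq, Set.mem_iUnion, Set.mem_inter_iff]
    constructor
    · intro h
      have : a + z • b ∈ ⋃ j, R j := hcover ▸ Set.mem_univ _
      obtain ⟨j, hj⟩ := Set.mem_iUnion.mp this
      exact ⟨j, h, hj⟩
    · rintro ⟨j, h, -⟩
      exact h
end
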